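/- Let λ, μ ∈ ℂ \ {0} with λ/μ ∉ ℝ, and define f(x,y) = |x|²|y|²/(1+|x|²+|y|²)³ on ℂ². For every n ≥ 28, the level set {(x,y) ∈ ℂ² : f(x,y) = 1/n} contains no point where λ x ∂f/∂x + μ y ∂f/∂y vanishes (with ∂/∂x, ∂/∂y the Wirtinger derivatives). In other words, the holomorphic vector field X = λx ∂/∂x + μy ∂/∂y is transversal to each such level set. -/

import Mathlib

open Complex

/-- `f(x,y) = |x|²|y|²/(1+|x|²+|y|²)³` on `ℂ²`. -/
noncomputable def fLevel : ℂ × ℂ → ℝ := fun p =>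
  ‖p.1‖ ^ 2 * ‖p.2‖ ^ 2
    / (1 + ‖p.1‖ ^ 2 + ‖p.2‖ ^ 2) ^ 3

/-- Wirtinger derivative of a real-valued function on `ℂ²` with respect to the
first complex variable: `∂F/∂x = ½(∂F/∂(Re x) − i ∂F/∂(Im x))`. -/
noncomputable def wirtingerX (F : ℂ × ℂ → ℝ) (p : ℂ × ℂ) : ℂ :=
  (1 / 2 : ℂ) * ((fderiv ℝ (fun x : ℂ => F (x, p.2)) p.1 1 : ℝ)
    - Complex.I * (fderiv ℝ (fun x : ℂ => F (x, p.2)) p.1 Complex.I : ℝ))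

/-- Wirtinger derivative with respect to the second complex variable. -/
noncomputable def wirtingerY (F : ℂ × ℂ → ℝ) (p : ℂ × ℂ) : ℂ :=
  (1 / 2 : ℂ) * ((fderiv ℝ (fun y : ℂ => F (p.1, y)) p.2 1 : ℝ)
    - Complex.I * (fderiv ℝ (fun y : ℂ => F (p.1, y)) p.2 Complex.I : ℝ))

noncomputable def Lns (z : ℂ) : ℂ →L[ℝ] ℝ :=
  (2*z.re) • Complex.reCLM + (2*z.im) • Complex.imCLM

lemma hasFDerivAt_normSq (z : ℂ) : HasFDerivAt Complex.normSq (Lns z) z := by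
  have h := ((Complex.reCLM.hasFDerivAt (x := z)).mul (Complex.reCLM.hasFDerivAt (x := z))).add
    ((Complex.imCLM.hasFDerivAt (x := z)).mul (Complex.imCLM.hasFDerivAt (x := z)))
  convert h using 1
  · rfl
  · rfl
  · rfl
  · ext w; simp [Complex.normSq_apply]
  ext w; simp [Lns]; ring

lemma hasFDerivAt_g (c : ℝ) (hc : 0 ≤ c) (z : ℂ) :
    HasFDerivAt (fun z : ℂ => c * Complex.normSq z / (1 + c + Complex.normSq z)^3)
      ((c * (1 + c - 2*Complex.normSq z)/(1+c+Complex.normSq z)^4) • Lns z) z := by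
  have hden : (1 + c + Complex.normSq z) ≠ 0 := ne_of_gt (by nlinarith [Complex.normSq_nonneg z])
  have hφ : HasDerivAt (fun t : ℝ => c * t / (1 + c + t)^3)
      (c * (1 + c - 2*Complex.normSq z)/(1+c+Complex.normSq z)^4) (Complex.normSq z) := by
    have h1 : HasDerivAt (fun t : ℝ => c * t) c (Complex.normSq z) := by
      simpa using (hasDerivAt_id (Complex.normSq z)).const_mul c
    have h2 : HasDerivAt (fun t : ℝ => (1 + c + t)^3)
        (3 * (1 + c + Complex.normSq z)^2) (Complex.normSq z) := by
      have : HasDerivAt (fun t : ℝ => 1 + c + t) 1 (Complex.normSq z) := by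
        simpa using (hasDerivAt_id (Complex.normSq z)).const_add (1 + c)
      simpa using (this.fun_pow 3)
    have := h1.div h2 (pow_ne_zero 3 hden)
    convert this using 1
    · rfl
    · rfl
    · rfl
    field_simp
    ring
  exact hφ.comp_hasFDerivAt z (hasFDerivAt_normSq z)

example (z : ℂ) : True := trivial


lemma wirtX_eval (x y : ℂ) :
    wirtingerX fLevel (x, y) =
      ((Complex.normSq y * (1 + Complex.normSq y - 2*Complex.normSq x) /
        (1 + Complex.normSq y + Complex.normSq x)^4 : ℝ) : ℂ) * (starRingEnd ℂ) x := by
  have h := hasFDerivAt_g (Complex.normSq y) (Complex.normSq_nonneg y) x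
  have hfun : (fun z : ℂ => fLevel (z, y)) = fun z : ℂ =>
      Complex.normSq y * Complex.normSq z / (1 + Complex.normSq y + Complex.normSq z)^3 := by
    funext z; simp only [fLevel, Complex.sq_norm]; ring
  rw [wirtingerX]
  simp only [hfun, h.fderiv]
  simp [Lns, Complex.ext_iff]
  constructor <;> ring

lemma wirtY_eval (x y : ℂ) :
    wirtingerY fLevel (x, y) =
      ((Complex.normSq x * (1 + Complex.normSq x - 2*Complex.normSq y) /
        (1 + Complex.normSq x + Complex.normSq y)^4 : ℝ) : ℂ) * (starRingEnd ℂ) y := by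
  have h := hasFDerivAt_g (Complex.normSq x) (Complex.normSq_nonneg x) y
  have hfun : (fun z : ℂ => fLevel (x, z)) = fun z : ℂ =>
      Complex.normSq x * Complex.normSq z / (1 + Complex.normSq x + Complex.normSq z)^3 := by
    funext z; simp only [fLevel, Complex.sq_norm]
  rw [wirtingerY]
  simp only [hfun, h.fderiv]
  simp [Lns, Complex.ext_iff]
  constructor <;> ring

/-- For `λ/μ ∉ ℝ` and `n ≥ 28`, the vector field `X = λx ∂/∂x + μy ∂/∂y` is
nowhere tangent to the level set `{f = 1/n}`: the transversality quantity
`λx ∂f/∂x + μy ∂f/∂y` does not vanish there. -/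
theorem stmt6 (lam mu : ℂ) (hlam : lam ≠ 0) (hmu : mu ≠ 0)
    (halpha : lam / mu ∉ Set.range ((↑) : ℝ → ℂ))
    (n : ℕ) (hn : 28 ≤ n) (p : ℂ × ℂ) (hp : fLevel p = 1 / (n : ℝ)) :
    lam * p.1 * wirtingerX fLevel p + mu * p.2 * wirtingerY fLevel p ≠ 0 := by
  obtain ⟨x, y⟩ := p
  set u := Complex.normSq x with hu
  set v := Complex.normSq y with hv
  have hu0 : 0 ≤ u := Complex.normSq_nonneg x
  have hv0 : 0 ≤ v := Complex.normSq_nonneg y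
  have hn0 : (0:ℝ) < 1 / n := by positivity
  have hpuv : u * v / (1 + u + v)^3 = 1 / n := by
    rw [← hp]; simp [fLevel, Complex.sq_norm]; rfl
  have hup : 0 < u := by
    rcases lt_or_eq_of_le hu0 with h | h
    · exact h
    · exfalso; rw [← h, zero_mul, zero_div] at hpuv; linarith
  have hvp : 0 < v := by
    rcases lt_or_eq_of_le hv0 with h | h
    · exact h
    · exfalso; rw [← h, mul_zero, zero_div] at hpuv; linarith
  have hsp : 0 < 1 + u + v := by linarith
  set A : ℝ := u * (v * (1 + v - 2*u) / (1 + v + u)^4) with hA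
  set B : ℝ := v * (u * (1 + u - 2*v) / (1 + u + v)^4) with hB
  have key : lam * x * wirtingerX fLevel (x, y) + mu * y * wirtingerY fLevel (x, y)
      = lam * (A : ℂ) + mu * (B : ℂ) := by
    rw [wirtX_eval, wirtY_eval, hA, hB]
    have h1 : x * ((starRingEnd ℂ) x) = (u : ℂ) := by rw [Complex.mul_conj]
    have h2 : y * ((starRingEnd ℂ) y) = (v : ℂ) := by rw [Complex.mul_conj]
    push_cast
    linear_combination (lam * ((v:ℂ) * (1 + (v:ℂ) - 2*(u:ℂ)) / (1 + (v:ℂ) + (u:ℂ))^4)) * h1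
      + (mu * ((u:ℂ) * (1 + (u:ℂ) - 2*(v:ℂ)) / (1 + (u:ℂ) + (v:ℂ))^4)) * h2
  rw [key]
  intro h0
  by_cases hAz : A = 0
  · -- then B = 0, forcing u = v = 1
    rw [hAz] at h0
    simp at h0
    have hBz : B = 0 := by
      rcases h0 with h | h
      · exact absurd h hmu
      · exact_mod_cast h
    have h1 : 1 + v - 2*u = 0 := by
      have h' := hAz
      rw [hA] at h'
      have hd : (0:ℝ) < (1 + v + u)^4 := by positivity
      have h'' : u * (v * (1 + v - 2*u)) = 0 := by
        field_simp at h'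
        linarith
      rcases mul_eq_zero.mp h'' with h | h
      · exact absurd h (ne_of_gt hup)
      · rcases mul_eq_zero.mp h with h | h
        · exact absurd h (ne_of_gt hvp)
        · exact h
    have h2 : 1 + u - 2*v = 0 := by
      have h' := hBz
      rw [hB] at h'
      have hd : (0:ℝ) < (1 + u + v)^4 := by positivity
      have h'' : v * (u * (1 + u - 2*v)) = 0 := by
        field_simp at h'
        linarith
      rcases mul_eq_zero.mp h'' with h | h
      · exact absurd h (ne_of_gt hvp)
      · rcases mul_eq_zero.mp h with h | h
        · exact absurd h (ne_of_gt hup)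
        · exact h
    have huv1 : u = 1 ∧ v = 1 := by constructor <;> linarith
    rw [huv1.1, huv1.2] at hpuv
    norm_num at hpuv
    have h28 : (28 : ℝ) ≤ n := by exact_mod_cast hn
    have hnp : (0:ℝ) < n := by linarith
    rw [inv_eq_one_div, div_eq_div_iff (by norm_num) (ne_of_gt hnp)] at hpuv
    linarith
  · -- A ≠ 0 : lam/mu is real
    apply halpha
    refine ⟨-(B/A), ?_⟩
    have hAC : (A : ℂ) ≠ 0 := Complex.ofReal_ne_zero.mpr hAz
    rw [eq_div_iff hmu]
    push_cast
    field_simp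
    linear_combination -h0
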